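/- Let (H_V) be a family of boundary kernels indexed by open sets, satisfying the compatibility H_V H_U = H_U whenever V ⊆ U. Let A_r ⊆ A_t for 0 < r < t, with the property that H_{A_r}(x, ·) is supported on K ∪ S_r for x ∈ A_r, that K ⊆ A_tᶜ, and that H_{A_t}(y,·) = ε_y for y ∉ A_t. If ν is a probability measure on S_η with η < r < t < 1, and ν_r := (r/η) (ν H_{A_r})|_{S_r}, then ν_t = (t/r) (ν_r H_{A_t})|_{S_t}, i.e., the measures ν_r (η < r < 1) are compatible. -/

import Mathlib

open MeasureTheory ProbabilityTheory

private lemma nnreal_smul_measure_eq {X : Type*} [MeasurableSpace X] (c : NNReal)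
    (μ : MeasureTheory.Measure X) : c • μ = (c : ENNReal) • μ := by
  ext s hs
  simp only [MeasureTheory.Measure.smul_apply, ENNReal.smul_def, smul_eq_mul]

private lemma bind_smul_aux {X : Type*} [MeasurableSpace X] (c : NNReal)
    (μ : MeasureTheory.Measure X) (κ : ProbabilityTheory.Kernel X X) :
    (c • μ).bind (fun x => κ x) = c • (μ.bind (fun x => κ x)) := by
  rw [nnreal_smul_measure_eq, nnreal_smul_measure_eq]
  ext s hs
  rw [MeasureTheory.Measure.bind_apply hs κ.measurable.aemeasurable,
    MeasureTheory.lintegral_smul_measure, MeasureTheory.Measure.smul_apply,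
    MeasureTheory.Measure.bind_apply hs κ.measurable.aemeasurable, smul_eq_mul]

private lemma bind_add_aux {X : Type*} [MeasurableSpace X]
    (μ₁ μ₂ : MeasureTheory.Measure X) (κ : ProbabilityTheory.Kernel X X) :
    (μ₁ + μ₂).bind (fun x => κ x) = μ₁.bind (fun x => κ x) + μ₂.bind (fun x => κ x) := by
  ext s hs
  rw [MeasureTheory.Measure.add_apply,
    MeasureTheory.Measure.bind_apply hs κ.measurable.aemeasurable,
    MeasureTheory.Measure.bind_apply hs κ.measurable.aemeasurable,
    MeasureTheory.Measure.bind_apply hs κ.measurable.aemeasurable,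
    MeasureTheory.lintegral_add_measure]

/-- Lemma 4.1 of the paper. Given boundary kernels `Hr = H_{A_r}` and
`Ht = H_{A_t}` with the compatibility `H_{A_r} H_{A_t} = H_{A_t}`, a probability
measure `ν` on `S_η` with `η < r < t < 1`, assume `ν H_{A_r}` is carried by
`K ∪ S_r`, `K` is disjoint from `A_t`, and `H_{A_t}(y,·) = ε_y` for `y ∉ A_t`.
Then `ν_t = (t/r)(ν_r H_{A_t})|_{S_t}`, where `ν_ρ := (ρ/η)(ν H_{A_ρ})|_{S_ρ}`:
the measures `ν_r`, `η < r < 1`, are compatible. -/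
theorem compatible_measures_from_one_level
    {X : Type*} [MeasurableSpace X]
    (K Sη Sr St Ar At : Set X)
    (hSr : MeasurableSet Sr) (hSt : MeasurableSet St)
    (hdisj_KSr : Disjoint K Sr) (hdisj_KSt : Disjoint K St)
    (hArAt : Ar ⊆ At) (hKAt : Disjoint K At)
    (Hr Ht : Kernel X X)
    -- boundary-kernel property: Dirac outside the set
    (hHr_out : ∀ x ∉ Ar, Hr x = Measure.dirac x)
    (hHt_out : ∀ x ∉ At, Ht x = Measure.dirac x)
    -- compatibility (H₁): H_{A_r} H_{A_t} = H_{A_t}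
    (hcomp : Ht.comp Hr = Ht)
    (η r t : NNReal) (hη : 0 < η) (hηr : η < r) (hrt : r < t) (ht1 : t < 1)
    (ν : Measure X) [IsProbabilityMeasure ν] (hν : ν Sηᶜ = 0)
    -- ν H_{A_r} is carried by K ∪ S_r
    (hcarr : (ν.bind (fun x => Hr x)) (K ∪ Sr)ᶜ = 0)
    -- normalization coming from H_{A_r}(x, S_r) = g(x)/r :
    (hnorm : (ν.bind (fun x => Hr x)) Sr = η / r) :
    (t / η : NNReal) • ((ν.bind (fun x => Ht x)).restrict St) =
      (t / r : NNReal) •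
        ((((r / η : NNReal) • ((ν.bind (fun x => Hr x)).restrict Sr)).bind
            (fun x => Ht x)).restrict St) := by

  have hr0 : (r : NNReal) ≠ 0 := (hη.trans hηr).ne'
  set μ := ν.bind (fun x => Hr x) with hμ
  -- ν Ht = (ν Hr) Ht
  have hbb : ν.bind (fun x => Ht x) = μ.bind (fun x => Ht x) := by
    rw [hμ, Measure.bind_bind Hr.measurable.aemeasurable Ht.measurable.aemeasurable]
    congr 1
    ext x : 1
    have h := congrArg (fun κ : Kernel X X => κ x) hcomp
    simpa [Kernel.comp_apply] using h.symm
  -- split μ along Sr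
  have hsplit : μ = μ.restrict Sr + μ.restrict Srᶜ :=
    (Measure.restrict_add_restrict_compl hSr).symm
  set μ₂ := μ.restrict Srᶜ with hμ₂
  have hμ₂K : μ₂ Kᶜ = 0 := by
    rw [hμ₂, Measure.restrict_apply' hSr.compl]
    rw [← Set.compl_union]
    exact hcarr
  have haeK : ∀ᵐ x ∂μ₂, x ∈ K := by
    rw [MeasureTheory.ae_iff]
    exact hμ₂K
  have hμ₂bind : (μ₂.bind (fun x => Ht x)) St = 0 := by
    rw [Measure.bind_apply hSt Ht.measurable.aemeasurable]
    rw [MeasureTheory.lintegral_eq_zero_iff (Ht.measurable_coe hSt)]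
    filter_upwards [haeK] with x hx
    have hxAt : x ∉ At := fun h => hKAt.ne_of_mem hx h rfl
    have hxSt : x ∉ St := fun h => hdisj_KSt.ne_of_mem hx h rfl
    simp [hHt_out x hxAt, Measure.dirac_apply' _ hSt, Set.indicator_of_notMem hxSt]
  have hkey : (μ.bind (fun x => Ht x)).restrict St
      = (((μ.restrict Sr).bind (fun x => Ht x)).restrict St) := by
    conv_lhs => rw [hsplit]
    rw [bind_add_aux, Measure.restrict_add,
      Measure.restrict_eq_zero.mpr hμ₂bind, add_zero]
  rw [hbb, hkey, bind_smul_aux, nnreal_smul_measure_eq (r / η),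
    nnreal_smul_measure_eq (t / η), nnreal_smul_measure_eq (t / r),
    Measure.restrict_smul, smul_smul]
  congr 1
  rw [← ENNReal.coe_mul]
  congr 1
  rw [div_mul_div_comm, mul_comm t r, mul_div_mul_left _ _ hr0]
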